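/- Let f : ℝⁿ → ℝ be C² satisfying quadratic growth with constant μ around a local minimum x̄ (with value f* and solution set S). For every μ♭ < μ and every λ♯ > λ_max(∇²f(x̄)) there is a neighborhood U of x̄ such that μ♭·dist(x,S) ≤ ‖∇f(x)‖ ≤ λ♯·dist(x,S) for all x ∈ U. -/

import Mathlib

open Metric Filter Topology
open scoped RealInnerProductSpace

private lemma taylor2 {φ φ' φ'' : ℝ → ℝ}
    (h1 : ∀ t, HasDerivAt φ (φ' t) t) (h2 : ∀ t, HasDerivAt φ' (φ'' t) t) :
    ∃ ξ ∈ Set.Ioo (0:ℝ) 1, φ 1 = φ 0 + φ' 0 + φ'' ξ / 2 := by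
  have hA : ∀ t : ℝ, HasDerivAt
      (fun t => φ t - φ 0 - t * φ' 0 - t ^ 2 / 2 * (2 * (φ 1 - φ 0 - φ' 0)))
      (φ' t - φ' 0 - t * (2 * (φ 1 - φ 0 - φ' 0))) t := by
    intro t
    have h3 : HasDerivAt (fun t : ℝ => t ^ 2 / 2 * (2 * (φ 1 - φ 0 - φ' 0)))
        (t * (2 * (φ 1 - φ 0 - φ' 0))) t := by
      have := ((hasDerivAt_pow 2 t).div_const 2).mul_const (2 * (φ 1 - φ 0 - φ' 0))
      refine this.congr_deriv ?_
      push_cast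
      ring
    have h4 : HasDerivAt (fun t : ℝ => t * φ' 0) (φ' 0) t := by
      simpa using (hasDerivAt_id t).mul_const (φ' 0)
    exact (((h1 t).sub_const (φ 0)).sub h4).sub h3
  obtain ⟨η, hη, hAη⟩ := exists_hasDerivAt_eq_zero (by norm_num : (0:ℝ) < 1)
    (fun t _ => (hA t).continuousAt.continuousWithinAt) (by ring) (fun t _ => hA t)
  have hB : ∀ t : ℝ, HasDerivAt
      (fun t => φ' t - φ' 0 - t * (2 * (φ 1 - φ 0 - φ' 0)))
      (φ'' t - 2 * (φ 1 - φ 0 - φ' 0)) t := by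
    intro t
    have h5 : HasDerivAt (fun t : ℝ => t * (2 * (φ 1 - φ 0 - φ' 0)))
        (2 * (φ 1 - φ 0 - φ' 0)) t := by
      simpa using (hasDerivAt_id t).mul_const (2 * (φ 1 - φ 0 - φ' 0))
    exact ((h2 t).sub_const (φ' 0)).sub h5
  obtain ⟨ξ, hξ, hBξ⟩ := exists_hasDerivAt_eq_zero hη.1
    (fun t _ => (hB t).continuousAt.continuousWithinAt)
    (by have := hAη; linarith [hAη] ) (fun t _ => hB t)
  exact ⟨ξ, ⟨hξ.1, hξ.2.trans hη.2⟩, by linarith [hBξ]⟩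

private lemma mvt01 {φ φ' : ℝ → ℝ} (h1 : ∀ t, HasDerivAt φ (φ' t) t) :
    ∃ η ∈ Set.Ioo (0:ℝ) 1, φ' η = φ 1 - φ 0 := by
  obtain ⟨η, hη, h⟩ := exists_hasDerivAt_eq_slope φ φ' (by norm_num : (0:ℝ) < 1)
    (fun t _ => (h1 t).continuousAt.continuousWithinAt) (fun t _ => h1 t)
  exact ⟨η, hη, by simpa using h⟩

set_option maxHeartbeats 8000000 in
/-- Quadratic growth implies a two-sided bound: the gradient norm is commensurate with the
distance to the solution set, with constants `μ♭ < μ` and `λ♯ > λ_max(∇²f(xb))`. -/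
theorem qg_implies_eb {n : ℕ}
    (f : EuclideanSpace ℝ (Fin n) → ℝ) (xb : EuclideanSpace ℝ (Fin n))
    (hf : ContDiff ℝ 2 f) (hmin : IsLocalMin f xb)
    (μ : ℝ) (hμ : 0 < μ)
    (S : Set (EuclideanSpace ℝ (Fin n)))
    (hS : S = {y | IsLocalMin f y ∧ f y = f xb})
    (hQG : ∀ᶠ x in 𝓝 xb, (μ / 2) * (Metric.infDist x S) ^ 2 ≤ f x - f xb) :
    ∀ μflat < μ, ∀ lamsharp : ℝ,
      (∀ v : EuclideanSpace ℝ (Fin n), v ≠ 0 →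
        ⟪v, fderiv ℝ (gradient f) xb v⟫ < lamsharp * ‖v‖ ^ 2) →
      ∀ᶠ x in 𝓝 xb,
        μflat * Metric.infDist x S ≤ ‖gradient f x‖ ∧
        ‖gradient f x‖ ≤ lamsharp * Metric.infDist x S := by
  intro μflat hμflat lamsharp hlam
  have hxbS : xb ∈ S := by rw [hS]; exact ⟨hmin, rfl⟩
  have hSne : S.Nonempty := ⟨xb, hxbS⟩
  rcases subsingleton_or_nontrivial (EuclideanSpace ℝ (Fin n)) with hsub | hnt
  · filter_upwards with x
    have hx : x = xb := Subsingleton.elim _ _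
    have hg0 : gradient f x = (0 : EuclideanSpace ℝ (Fin n)) := Subsingleton.elim _ _
    have hdist : Metric.infDist x S = 0 := by rw [hx]; exact infDist_zero_of_mem hxbS
    rw [hdist, hg0]; simp
  -- smoothness facts
  have hf1 : ContDiff ℝ 1 (fderiv ℝ f) := hf.fderiv_right (by norm_num)
  have hfd : Differentiable ℝ f := hf.differentiable (by norm_num)
  have hg : ContDiff ℝ 1 (gradient f) :=
    (InnerProductSpace.toDual ℝ (EuclideanSpace ℝ (Fin n))).symm.contDiff.comp hf1
  have hgdiff : Differentiable ℝ (gradient f) := hg.differentiable one_ne_zero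
  have hHcont : Continuous (fun y => fderiv ℝ (gradient f) y) := hg.continuous_fderiv one_ne_zero
  have hinner_g : ∀ (y v : EuclideanSpace ℝ (Fin n)), ⟪gradient f y, v⟫ = fderiv ℝ f y v :=
    fun y v => InnerProductSpace.toDual_symm_apply
  have hgzero : ∀ y, IsLocalMin f y → gradient f y = 0 := by
    intro y hy
    show (InnerProductSpace.toDual ℝ _).symm (fderiv ℝ f y) = 0
    rw [hy.fderiv_eq_zero]; simp
  have hH : ∀ (y v u : EuclideanSpace ℝ (Fin n)),
      ⟪fderiv ℝ (gradient f) y v, u⟫ = fderiv ℝ (fderiv ℝ f) y v u := by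
    intro y v u
    have heq : gradient f =
        ⇑(InnerProductSpace.toDual ℝ (EuclideanSpace ℝ (Fin n))).symm ∘ fderiv ℝ f := rfl
    rw [heq, LinearIsometryEquiv.comp_fderiv]
    exact InnerProductSpace.toDual_symm_apply
  have hsym2 : ∀ (u v : EuclideanSpace ℝ (Fin n)),
      fderiv ℝ (fderiv ℝ f) xb u v = fderiv ℝ (fderiv ℝ f) xb v u :=
    second_derivative_symmetric (fun y => (hfd y).hasFDerivAt)
      ((hf1.differentiable one_ne_zero xb).hasFDerivAt)
  have hsymHb : ∀ (u v : EuclideanSpace ℝ (Fin n)),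
      ⟪fderiv ℝ (gradient f) xb u, v⟫ = ⟪fderiv ℝ (gradient f) xb v, u⟫ := by
    intro u v; rw [hH, hH, hsym2]
  -- chain rules
  have hcurve : ∀ (s v : EuclideanSpace ℝ (Fin n)) (t : ℝ),
      HasDerivAt (fun t : ℝ => s + t • v) v t := by
    intro s v t
    simpa using ((hasDerivAt_id t).smul_const v).const_add s
  have hphi : ∀ (s v : EuclideanSpace ℝ (Fin n)) (t : ℝ),
      HasDerivAt (fun t : ℝ => f (s + t • v)) ⟪gradient f (s + t • v), v⟫ t := by
    intro s v t
    have h := (hfd (s + t • v)).hasFDerivAt.comp_hasDerivAt t (hcurve s v t)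
    rw [hinner_g]
    exact h
  have hphi' : ∀ (s v : EuclideanSpace ℝ (Fin n)) (t : ℝ),
      HasDerivAt (fun t : ℝ => ⟪gradient f (s + t • v), v⟫)
        ⟪fderiv ℝ (gradient f) (s + t • v) v, v⟫ t := by
    intro s v t
    have h := (hgdiff (s + t • v)).hasFDerivAt.comp_hasDerivAt t (hcurve s v t)
    have h2 := HasDerivAt.inner ℝ h (hasDerivAt_const t v)
    simpa [Function.comp] using h2
  have Texp : ∀ (s v : EuclideanSpace ℝ (Fin n)), ∃ ξ ∈ Set.Ioo (0:ℝ) 1,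
      f (s + v) = f s + ⟪gradient f s, v⟫
        + ⟪fderiv ℝ (gradient f) (s + ξ • v) v, v⟫ / 2 := by
    intro s v
    obtain ⟨ξ, hξ, h⟩ := taylor2 (hphi s v) (hphi' s v)
    exact ⟨ξ, hξ, by simpa using h⟩
  have Mexp : ∀ (s v : EuclideanSpace ℝ (Fin n)), ∃ η ∈ Set.Ioo (0:ℝ) 1,
      ⟪fderiv ℝ (gradient f) (s + η • v) v, v⟫
        = ⟪gradient f (s + v), v⟫ - ⟪gradient f s, v⟫ := by
    intro s v
    obtain ⟨η, hη, h⟩ := mvt01 (hphi' s v)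
    exact ⟨η, hη, by simpa using h⟩
  have hHbound : ∀ (A B : EuclideanSpace ℝ (Fin n) →L[ℝ] EuclideanSpace ℝ (Fin n))
      (v : EuclideanSpace ℝ (Fin n)), |⟪A v, v⟫ - ⟪B v, v⟫| ≤ ‖A - B‖ * ‖v‖ ^ 2 := by
    intro A B v
    have h1 : ⟪A v, v⟫ - ⟪B v, v⟫ = ⟪(A - B) v, v⟫ := by
      simp [ContinuousLinearMap.sub_apply, inner_sub_left]
    rw [h1]
    calc |⟪(A - B) v, v⟫| ≤ ‖(A - B) v‖ * ‖v‖ := abs_real_inner_le_norm _ _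
      _ ≤ (‖A - B‖ * ‖v‖) * ‖v‖ := by
          gcongr
          exact (A - B).le_opNorm v
      _ = ‖A - B‖ * ‖v‖ ^ 2 := by ring
  -- positive semidefiniteness of the Hessian at xb
  have hPSD : ∀ w : EuclideanSpace ℝ (Fin n), 0 ≤ ⟪fderiv ℝ (gradient f) xb w, w⟫ := by
    intro w
    rcases eq_or_ne w 0 with rfl | hw
    · simp
    have hw2 : (0:ℝ) < ‖w‖ := norm_pos_iff.mpr hw
    refine le_of_forall_pos_le_add ?_
    intro ε hε
    have h1 : ∀ᶠ y in 𝓝 xb,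
        ‖fderiv ℝ (gradient f) y - fderiv ℝ (gradient f) xb‖ < ε / ‖w‖ ^ 2 := by
      have h2 := Metric.tendsto_nhds.mp (hHcont.continuousAt (x := xb)) (ε / ‖w‖ ^ 2) (by positivity)
      simpa [dist_eq_norm] using h2
    obtain ⟨r, hr, hB⟩ := Metric.eventually_nhds_iff_ball.mp (h1.and hmin)
    have hcpos : (0:ℝ) < r / (2 * ‖w‖) := by positivity
    obtain ⟨ξ, hξ, hT⟩ := Texp xb ((r / (2 * ‖w‖)) • w)
    have hvn : ‖(r / (2 * ‖w‖)) • w‖ = r / 2 := by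
      rw [norm_smul, Real.norm_eq_abs, abs_of_pos hcpos]
      field_simp
    have hmem : xb + (r / (2 * ‖w‖)) • w ∈ ball xb r := by
      rw [mem_ball, dist_eq_norm]
      have : xb + (r / (2 * ‖w‖)) • w - xb = (r / (2 * ‖w‖)) • w := by abel
      rw [this, hvn]; linarith
    have hmemξ : xb + ξ • ((r / (2 * ‖w‖)) • w) ∈ ball xb r := by
      rw [mem_ball, dist_eq_norm]
      have h3 : xb + ξ • ((r / (2 * ‖w‖)) • w) - xb = ξ • ((r / (2 * ‖w‖)) • w) := by abel
      rw [h3, norm_smul, Real.norm_eq_abs, hvn, abs_of_pos hξ.1]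
      nlinarith [hξ.1, hξ.2, hr]
    have hfge : f xb ≤ f (xb + (r / (2 * ‖w‖)) • w) := (hB _ hmem).2
    have hclose := (hB _ hmemξ).1
    rw [hgzero xb hmin, inner_zero_left] at hT
    have hHy : 0 ≤ ⟪fderiv ℝ (gradient f) (xb + ξ • ((r / (2 * ‖w‖)) • w))
        ((r / (2 * ‖w‖)) • w), (r / (2 * ‖w‖)) • w⟫ := by linarith
    have hdiff := hHbound (fderiv ℝ (gradient f) (xb + ξ • ((r / (2 * ‖w‖)) • w)))
      (fderiv ℝ (gradient f) xb) ((r / (2 * ‖w‖)) • w)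
    have hbnd : ‖fderiv ℝ (gradient f) (xb + ξ • ((r / (2 * ‖w‖)) • w))
        - fderiv ℝ (gradient f) xb‖ * ‖(r / (2 * ‖w‖)) • w‖ ^ 2
        ≤ (ε / ‖w‖ ^ 2) * ‖(r / (2 * ‖w‖)) • w‖ ^ 2 := by
      apply mul_le_mul_of_nonneg_right (le_of_lt hclose) (sq_nonneg _)
    have habs := abs_le.mp (hdiff.trans hbnd)
    have hsmul : ⟪fderiv ℝ (gradient f) xb ((r / (2 * ‖w‖)) • w), (r / (2 * ‖w‖)) • w⟫
        = (r / (2 * ‖w‖)) ^ 2 * ⟪fderiv ℝ (gradient f) xb w, w⟫ := by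
      rw [map_smul, real_inner_smul_left, real_inner_smul_right]; ring
    have hnsq : ‖(r / (2 * ‖w‖)) • w‖ ^ 2 = (r / (2 * ‖w‖)) ^ 2 * ‖w‖ ^ 2 := by
      rw [norm_smul, Real.norm_eq_abs, abs_of_pos hcpos]; ring
    rw [hsmul, hnsq] at habs
    have h4 := habs.2
    have h5 : (ε / ‖w‖ ^ 2) * ((r / (2 * ‖w‖)) ^ 2 * ‖w‖ ^ 2)
        = ε * (r / (2 * ‖w‖)) ^ 2 := by
      field_simp
    rw [h5] at h4
    have hc2 : (0:ℝ) < (r / (2 * ‖w‖)) ^ 2 := by positivity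
    set A : ℝ := ⟪fderiv ℝ (gradient f) (xb + ξ • ((r / (2 * ‖w‖)) • w))
        ((r / (2 * ‖w‖)) • w), (r / (2 * ‖w‖)) • w⟫ with hAdef
    set B : ℝ := ⟪fderiv ℝ (gradient f) xb w, w⟫ with hBdef
    set c2 : ℝ := (r / (2 * ‖w‖)) ^ 2 with hc2def
    nlinarith [h4, hHy, hc2]
  -- largest eigenvalue bound
  obtain ⟨v₀, hv₀, hminOn⟩ := (isCompact_sphere (0 : EuclideanSpace ℝ (Fin n)) 1).exists_isMinOn
    (NormedSpace.sphere_nonempty.mpr zero_le_one)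
    (f := fun v => lamsharp * ‖v‖ ^ 2 - ⟪v, fderiv ℝ (gradient f) xb v⟫)
    (Continuous.continuousOn
      ((continuous_const.mul ((continuous_norm).pow 2)).sub
        (Continuous.inner continuous_id (fderiv ℝ (gradient f) xb).continuous)))
  have hv₀n : ‖v₀‖ = 1 := mem_sphere_zero_iff_norm.mp hv₀
  have hv₀ne : v₀ ≠ 0 := by
    intro h; rw [h, norm_zero] at hv₀n; norm_num at hv₀n
  set lam : ℝ := ⟪v₀, fderiv ℝ (gradient f) xb v₀⟫ with hlamdef
  have hlam0 : 0 ≤ lam := by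
    rw [hlamdef, real_inner_comm]; exact hPSD v₀
  have hlamlt : lam < lamsharp := by
    have := hlam v₀ hv₀ne
    rwa [hv₀n, one_pow, mul_one] at this
  have hRay : ∀ u : EuclideanSpace ℝ (Fin n),
      ⟪fderiv ℝ (gradient f) xb u, u⟫ ≤ lam * ‖u‖ ^ 2 := by
    intro u
    rcases eq_or_ne u 0 with rfl | hu
    · simp
    have hun : (0:ℝ) < ‖u‖ := norm_pos_iff.mpr hu
    have hwmem : ‖u‖⁻¹ • u ∈ sphere (0 : EuclideanSpace ℝ (Fin n)) 1 := by
      rw [mem_sphere_zero_iff_norm, norm_smul, Real.norm_eq_abs, abs_of_pos (by positivity)]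
      field_simp
    have h6 := isMinOn_iff.mp hminOn _ hwmem
    rw [hv₀n, mem_sphere_zero_iff_norm.mp hwmem] at h6
    have h7 : ⟪‖u‖⁻¹ • u, fderiv ℝ (gradient f) xb (‖u‖⁻¹ • u)⟫
        = ‖u‖⁻¹ ^ 2 * ⟪u, fderiv ℝ (gradient f) xb u⟫ := by
      rw [map_smul, real_inner_smul_left, real_inner_smul_right]; ring
    rw [h7] at h6
    have h8 : ‖u‖⁻¹ ^ 2 * ⟪u, fderiv ℝ (gradient f) xb u⟫ ≤ lam := by
      rw [hlamdef]; linarith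
    have h9 : ⟪u, fderiv ℝ (gradient f) xb u⟫ ≤ lam * ‖u‖ ^ 2 := by
      have := mul_le_mul_of_nonneg_right h8 (sq_nonneg ‖u‖)
      have hinv : ‖u‖⁻¹ ^ 2 * ⟪u, fderiv ℝ (gradient f) xb u⟫ * ‖u‖ ^ 2
          = ⟪u, fderiv ℝ (gradient f) xb u⟫ := by
        field_simp
      rw [hinv] at this
      linarith [this]
    rw [real_inner_comm]
    exact h9
  have hCS : ∀ (u v : EuclideanSpace ℝ (Fin n)),
      ⟪fderiv ℝ (gradient f) xb u, v⟫ ^ 2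
        ≤ ⟪fderiv ℝ (gradient f) xb u, u⟫ * ⟪fderiv ℝ (gradient f) xb v, v⟫ := by
    intro u v
    have hquad : ∀ x : ℝ, 0 ≤ ⟪fderiv ℝ (gradient f) xb v, v⟫ * (x * x)
        + (2 * ⟪fderiv ℝ (gradient f) xb u, v⟫) * x
        + ⟪fderiv ℝ (gradient f) xb u, u⟫ := by
      intro x
      have h0 := hPSD (u + x • v)
      have hexp : ⟪fderiv ℝ (gradient f) xb (u + x • v), u + x • v⟫
          = ⟪fderiv ℝ (gradient f) xb v, v⟫ * (x * x)
            + (2 * ⟪fderiv ℝ (gradient f) xb u, v⟫) * x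
            + ⟪fderiv ℝ (gradient f) xb u, u⟫ := by
        rw [map_add, map_smul, inner_add_left, inner_add_right, inner_add_right,
          real_inner_smul_left, real_inner_smul_left, real_inner_smul_right,
          real_inner_smul_right, hsymHb v u]
        ring
      rw [hexp] at h0
      exact h0
    have hd := discrim_le_zero hquad
    rw [discrim] at hd
    nlinarith [hd]
  have hop : ∀ v : EuclideanSpace ℝ (Fin n),
      ‖fderiv ℝ (gradient f) xb v‖ ≤ lam * ‖v‖ := by
    intro v
    obtain ⟨u, hu⟩ : ∃ u, fderiv ℝ (gradient f) xb v = u := ⟨_, rfl⟩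
    rw [hu]
    rcases eq_or_lt_of_le (norm_nonneg u) with h0 | h0
    · rw [← h0]; positivity
    have h2 := hCS v u
    have h3 := hRay v
    have h4 := hRay u
    have h5 := hPSD u
    rw [hu] at h2 h3
    rw [real_inner_self_eq_norm_sq] at h2
    have h6 : 0 ≤ ⟪u, v⟫ := by have h7 := hPSD v; rwa [hu] at h7
    have hprod : ⟪u, v⟫ * ⟪fderiv ℝ (gradient f) xb u, u⟫
        ≤ (lam * ‖v‖ ^ 2) * (lam * ‖u‖ ^ 2) := mul_le_mul h3 h4 h5 (by positivity)
    have hN4 : (‖u‖ ^ 2) * (‖u‖ ^ 2) ≤ ((lam * ‖v‖) ^ 2) * (‖u‖ ^ 2) := by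
      nlinarith [h2, hprod]
    have hN2 : ‖u‖ ^ 2 ≤ (lam * ‖v‖) ^ 2 := le_of_mul_le_mul_right hN4 (pow_pos h0 2)
    have hs := Real.sqrt_le_sqrt hN2
    rwa [Real.sqrt_sq (norm_nonneg _), Real.sqrt_sq (by positivity)] at hs
  have hHbnorm : ‖fderiv ℝ (gradient f) xb‖ ≤ lam :=
    ContinuousLinearMap.opNorm_le_bound _ hlam0 hop
  -- main argument
  set ε₀ : ℝ := min ((lamsharp - lam) / 2) ((μ - μflat) / 2) with hε₀def
  have hε₀pos : 0 < ε₀ := lt_min (by linarith) (by linarith)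
  have hHev : ∀ᶠ y in 𝓝 xb,
      ‖fderiv ℝ (gradient f) y - fderiv ℝ (gradient f) xb‖ < ε₀ := by
    have h2 := Metric.tendsto_nhds.mp (hHcont.continuousAt (x := xb)) ε₀ hε₀pos
    simpa [dist_eq_norm] using h2
  obtain ⟨r, hr, hB⟩ := Metric.eventually_nhds_iff_ball.mp (hQG.and hHev)
  rw [Metric.eventually_nhds_iff_ball]
  refine ⟨r / 4, by positivity, ?_⟩
  intro x hx
  have hxr : dist x xb < r / 4 := mem_ball.mp hx
  have hxmem : x ∈ ball xb r := mem_ball.mpr (by linarith)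
  set d : ℝ := Metric.infDist x S with hddef
  have hd0 : 0 ≤ d := infDist_nonneg
  have hdlt : d < r / 4 := lt_of_le_of_lt (by
    rw [hddef]
    calc Metric.infDist x S ≤ dist x xb := infDist_le_dist_of_mem hxbS
      _ = dist x xb := rfl) hxr
  have key : ∀ δ : ℝ, 0 < δ → δ < r / 4 →
      μ * d ^ 2 - 2 * ε₀ * (d + δ) ^ 2 ≤ ‖gradient f x‖ * (d + δ) ∧
      ‖gradient f x‖ ≤ (lam + ε₀) * (d + δ) := by
    intro δ hδ hδ4
    obtain ⟨s, hsS, hsdist⟩ := (infDist_lt_iff hSne).mp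
      (show Metric.infDist x S < d + δ by rw [← hddef]; linarith)
    have hsx : ‖x - s‖ < d + δ := by rwa [← dist_eq_norm]
    have hsxb : dist s xb < 3 * r / 4 := by
      calc dist s xb ≤ dist s x + dist x xb := dist_triangle _ _ _
        _ = dist x s + dist x xb := by rw [dist_comm]
        _ < (d + δ) + r / 4 := by linarith
        _ ≤ 3 * r / 4 := by linarith
    have hsmemball : s ∈ ball xb r := mem_ball.mpr (by linarith)
    have hsmem : ∀ t : ℝ, t ∈ Set.Icc (0:ℝ) 1 → s + t • (x - s) ∈ ball xb r := by
      intro t ht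
      rw [mem_ball, dist_eq_norm]
      have heq : s + t • (x - s) - xb = (1 - t) • (s - xb) + t • (x - xb) := by
        module
      rw [heq]
      have hb1 : ‖(1 - t) • (s - xb) + t • (x - xb)‖
          ≤ (1 - t) * ‖s - xb‖ + t * ‖x - xb‖ := by
        calc ‖(1 - t) • (s - xb) + t • (x - xb)‖
            ≤ ‖(1 - t) • (s - xb)‖ + ‖t • (x - xb)‖ := norm_add_le _ _
          _ = (1 - t) * ‖s - xb‖ + t * ‖x - xb‖ := by
              rw [norm_smul, norm_smul, Real.norm_eq_abs, Real.norm_eq_abs,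
                abs_of_nonneg (by linarith [ht.2]), abs_of_nonneg ht.1]
      have hb2 : ‖s - xb‖ < 3 * r / 4 := by rw [← dist_eq_norm]; exact hsxb
      have hb3 : ‖x - xb‖ < r / 4 := by rw [← dist_eq_norm]; exact hxr
      nlinarith [hb1, hb2, hb3, ht.1, ht.2, norm_nonneg (s - xb), norm_nonneg (x - xb)]
    have hsS' : IsLocalMin f s ∧ f s = f xb := by rw [hS] at hsS; exact hsS
    have hgs : gradient f s = 0 := hgzero s hsS'.1
    have hfs : f s = f xb := hsS'.2
    obtain ⟨ξ, hξ, hT⟩ := Texp s (x - s)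
    obtain ⟨η, hη, hM⟩ := Mexp s (x - s)
    have hxs : s + (x - s) = x := by abel
    rw [hxs, hgs, inner_zero_left] at hT
    rw [hxs, hgs, inner_zero_left, sub_zero] at hM
    have hQGx : (μ / 2) * d ^ 2 ≤ f x - f xb := by
      have := (hB x hxmem).1
      rwa [← hddef] at this
    have haξ : μ * d ^ 2 ≤ ⟪fderiv ℝ (gradient f) (s + ξ • (x - s)) (x - s), x - s⟫ := by
      linarith [hT, hQGx, hfs]
    have hξmem := hsmem ξ ⟨le_of_lt hξ.1, le_of_lt hξ.2⟩
    have hηmem := hsmem η ⟨le_of_lt hη.1, le_of_lt hη.2⟩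
    have hvsq : ‖x - s‖ ^ 2 ≤ (d + δ) ^ 2 := by
      nlinarith [norm_nonneg (x - s), hsx]
    have habsξ : |⟪fderiv ℝ (gradient f) (s + ξ • (x - s)) (x - s), x - s⟫
        - ⟪fderiv ℝ (gradient f) xb (x - s), x - s⟫| ≤ ε₀ * (d + δ) ^ 2 := by
      refine le_trans (hHbound _ _ _) ?_
      exact mul_le_mul (le_of_lt (hB _ hξmem).2) hvsq (sq_nonneg _) hε₀pos.le
    have habsη : |⟪fderiv ℝ (gradient f) (s + η • (x - s)) (x - s), x - s⟫
        - ⟪fderiv ℝ (gradient f) xb (x - s), x - s⟫| ≤ ε₀ * (d + δ) ^ 2 := by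
      refine le_trans (hHbound _ _ _) ?_
      exact mul_le_mul (le_of_lt (hB _ hηmem).2) hvsq (sq_nonneg _) hε₀pos.le
    have hinner := real_inner_le_norm (gradient f x) (x - s)
    have hgn : (0:ℝ) ≤ ‖gradient f x‖ := norm_nonneg _
    have e1 := abs_le.mp habsξ
    have e2 := abs_le.mp habsη
    have e3 : ‖gradient f x‖ * ‖x - s‖ ≤ ‖gradient f x‖ * (d + δ) :=
      mul_le_mul_of_nonneg_left (le_of_lt hsx) hgn
    constructor
    · linarith [e1.1, e1.2, e2.1, e2.2, hinner, e3, haξ, hM]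
    · have hub : ‖gradient f x‖ ≤ (lam + ε₀) * ‖x - s‖ := by
        have hmvi := Convex.norm_image_sub_le_of_norm_fderiv_le
          (f := gradient f) (C := lam + ε₀) (s := ball xb r)
          (fun y _ => hgdiff y) (fun y hy => by
            calc ‖fderiv ℝ (gradient f) y‖
                = ‖(fderiv ℝ (gradient f) y - fderiv ℝ (gradient f) xb)
                    + fderiv ℝ (gradient f) xb‖ := by rw [sub_add_cancel]
              _ ≤ ‖fderiv ℝ (gradient f) y - fderiv ℝ (gradient f) xb‖
                    + ‖fderiv ℝ (gradient f) xb‖ := norm_add_le _ _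
              _ ≤ ε₀ + lam := add_le_add (le_of_lt (hB y hy).2) hHbnorm
              _ = lam + ε₀ := by ring)
          (convex_ball xb r) hsmemball hxmem
        rwa [hgs, sub_zero] at hmvi
      calc ‖gradient f x‖ ≤ (lam + ε₀) * ‖x - s‖ := hub
        _ ≤ (lam + ε₀) * (d + δ) :=
            mul_le_mul_of_nonneg_left (le_of_lt hsx) (by positivity)
  -- pass to the limit δ → 0⁺
  have hIoo : Set.Ioo (0:ℝ) (r / 4) ∈ 𝓝[>] (0:ℝ) :=
    Ioo_mem_nhdsGT (by positivity)
  have t2 : Filter.Tendsto (fun δ : ℝ => ‖gradient f x‖ * (d + δ)) (𝓝[>] (0:ℝ))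
      (𝓝 (‖gradient f x‖ * d)) := by
    have hcont : Continuous (fun δ : ℝ => ‖gradient f x‖ * (d + δ)) := by continuity
    have := (hcont.tendsto 0).mono_left (nhdsWithin_le_nhds (s := Set.Ioi (0:ℝ)))
    simpa using this
  constructor
  · rcases eq_or_lt_of_le hd0 with h0 | h0
    · rw [← h0]; simpa using norm_nonneg (gradient f x)
    have t1 : Filter.Tendsto (fun δ : ℝ => μ * d ^ 2 - 2 * ε₀ * (d + δ) ^ 2) (𝓝[>] (0:ℝ))
        (𝓝 (μ * d ^ 2 - 2 * ε₀ * d ^ 2)) := by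
      have hcont : Continuous (fun δ : ℝ => μ * d ^ 2 - 2 * ε₀ * (d + δ) ^ 2) := by continuity
      have := (hcont.tendsto 0).mono_left (nhdsWithin_le_nhds (s := Set.Ioi (0:ℝ)))
      simpa using this
    have hev : ∀ᶠ δ in 𝓝[>] (0:ℝ),
        μ * d ^ 2 - 2 * ε₀ * (d + δ) ^ 2 ≤ ‖gradient f x‖ * (d + δ) := by
      filter_upwards [hIoo] with δ hδ
      exact (key δ hδ.1 hδ.2).1
    have hL := le_of_tendsto_of_tendsto t1 t2 hev
    have h2ε : 2 * ε₀ ≤ μ - μflat := by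
      have := min_le_right ((lamsharp - lam) / 2) ((μ - μflat) / 2)
      rw [← hε₀def] at this
      linarith
    have hmm : (μflat * d) * d ≤ ‖gradient f x‖ * d := by
      nlinarith [hL, mul_nonneg (mul_nonneg
        (show (0:ℝ) ≤ μ - 2 * ε₀ - μflat by linarith) h0.le) h0.le]
    exact le_of_mul_le_mul_right hmm h0
  · have t3 : Filter.Tendsto (fun δ : ℝ => (lam + ε₀) * (d + δ)) (𝓝[>] (0:ℝ))
        (𝓝 ((lam + ε₀) * d)) := by
      have hcont : Continuous (fun δ : ℝ => (lam + ε₀) * (d + δ)) := by continuity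
      have := (hcont.tendsto 0).mono_left (nhdsWithin_le_nhds (s := Set.Ioi (0:ℝ)))
      simpa using this
    have hev : ∀ᶠ δ in 𝓝[>] (0:ℝ),
        (fun _ : ℝ => ‖gradient f x‖) δ ≤ (lam + ε₀) * (d + δ) := by
      filter_upwards [hIoo] with δ hδ
      exact (key δ hδ.1 hδ.2).2
    have hU := le_of_tendsto_of_tendsto tendsto_const_nhds t3 hev
    have hls : lam + ε₀ ≤ lamsharp := by
      have := min_le_left ((lamsharp - lam) / 2) ((μ - μflat) / 2)
      rw [← hε₀def] at this
      linarith
    calc ‖gradient f x‖ ≤ (lam + ε₀) * d := hU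
      _ ≤ lamsharp * d := mul_le_mul_of_nonneg_right hls hd0
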